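/- Let M ≻ 0, D ⪰ 0, L ⪰ 0 be real symmetric n×n matrices and ζ ∈ [0, π/2). A complex quadratic eigenvalue pair λ, λ* of (λ²M + λD + L)ν = 0 satisfies sin ζ · Re(λ) + cos ζ · |Im(λ)| ≤ 0 if and only if ⟨ν, Dν⟩² − 4(cos ζ)² ⟨ν, Lν⟩⟨ν, Mν⟩ ≥ 0, where ν is the corresponding eigenvector. -/

import Mathlib

set_option maxHeartbeats 1000000

open Matrix Complex Real

lemma quad_real {n : ℕ} (A : Matrix (Fin n) (Fin n) ℝ) (hA : A.IsHermitian) (ν : Fin n → ℂ) :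
    star ν ⬝ᵥ (A.map Complex.ofReal) *ᵥ ν =
      (((fun i => (ν i).re) ⬝ᵥ A *ᵥ (fun i => (ν i).re)
       + (fun i => (ν i).im) ⬝ᵥ A *ᵥ (fun i => (ν i).im) : ℝ) : ℂ) := by
  have hsym : ∀ i j, A j i = A i j := fun i j => by
    simpa using (congrFun (congrFun hA j) i).symm
  simp only [dotProduct, mulVec, Matrix.map_apply, Pi.star_apply, RCLike.star_def]
  apply Complex.ext
  · simp only [Complex.re_sum, Complex.im_sum, Complex.mul_re, Complex.mul_im,
      Complex.conj_re, Complex.conj_im, Complex.ofReal_re, Complex.ofReal_im,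
      Complex.add_re, Complex.ofReal_re, zero_mul, mul_zero, sub_zero, add_zero, neg_mul,
      sub_neg_eq_add]
    rw [← Finset.sum_add_distrib]
  · simp only [Complex.re_sum, Complex.im_sum, Complex.mul_re, Complex.mul_im,
      Complex.conj_re, Complex.conj_im, Complex.ofReal_re, Complex.ofReal_im,
      Complex.add_im, zero_mul, mul_zero, sub_zero, add_zero, zero_add, neg_mul]
    have : ∑ x : Fin n, (ν x).re * ∑ j, A x j * (ν j).im
        = ∑ x : Fin n, (ν x).im * ∑ j, A x j * (ν j).re := by
      simp_rw [Finset.mul_sum]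
      rw [Finset.sum_comm]
      apply Finset.sum_congr rfl; intro i _
      apply Finset.sum_congr rfl; intro j _
      rw [hsym i j]; ring
    rw [Finset.sum_add_distrib, Finset.sum_neg_distrib, this]; ring

theorem stmt_6 {n : ℕ} (M D L : Matrix (Fin n) (Fin n) ℝ)
    (hM : M.PosDef) (hD : D.PosSemidef) (hL : L.PosSemidef)
    (ζ : ℝ) (hζ0 : 0 ≤ ζ) (hζ1 : ζ < Real.pi / 2)
    (lam : ℂ) (ν : Fin n → ℂ) (hν : ν ≠ 0)
    (hqep : (lam ^ 2 • M.map (Complex.ofReal) + lam • D.map (Complex.ofReal)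
        + L.map (Complex.ofReal)).mulVec ν = 0) :
    Real.sin ζ * lam.re + Real.cos ζ * |lam.im| ≤ 0 ↔
      (star ν ⬝ᵥ (D.map (Complex.ofReal)).mulVec ν).re ^ 2
        - 4 * Real.cos ζ ^ 2 * (star ν ⬝ᵥ (L.map (Complex.ofReal)).mulVec ν).re
          * (star ν ⬝ᵥ (M.map (Complex.ofReal)).mulVec ν).re ≥ 0 := by
  have hMq := quad_real M hM.1 ν
  have hDq := quad_real D hD.1 ν
  have hLq := quad_real L hL.1 ν
  set ar : Fin n → ℝ := fun i => (ν i).re with har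
  set ai : Fin n → ℝ := fun i => (ν i).im with hai
  set mr : ℝ := ar ⬝ᵥ M *ᵥ ar + ai ⬝ᵥ M *ᵥ ai with hmr
  set dr : ℝ := ar ⬝ᵥ D *ᵥ ar + ai ⬝ᵥ D *ᵥ ai with hdr
  set lr : ℝ := ar ⬝ᵥ L *ᵥ ar + ai ⬝ᵥ L *ᵥ ai with hlr
  have hMre : (star ν ⬝ᵥ (M.map Complex.ofReal) *ᵥ ν).re = mr := by rw [hMq]; simp
  have hDre : (star ν ⬝ᵥ (D.map Complex.ofReal) *ᵥ ν).re = dr := by rw [hDq]; simp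
  have hLre : (star ν ⬝ᵥ (L.map Complex.ofReal) *ᵥ ν).re = lr := by rw [hLq]; simp
  -- positivity facts
  have hvec : ¬(ar = 0 ∧ ai = 0) := by
    rintro ⟨h1, h2⟩
    apply hν; funext i
    exact Complex.ext (congrFun h1 i) (congrFun h2 i)
  have hmr0 : 0 < mr := by
    have hA := hM.posSemidef.dotProduct_mulVec_nonneg ar
    have hB := hM.posSemidef.dotProduct_mulVec_nonneg ai
    rw [star_trivial] at hA hB
    rcases not_and_or.mp hvec with h | h
    · have := hM.dotProduct_mulVec_pos h; rw [star_trivial] at this; rw [hmr]; linarith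
    · have := hM.dotProduct_mulVec_pos h; rw [star_trivial] at this; rw [hmr]; linarith
  have hdr0 : 0 ≤ dr := by
    have hA := hD.dotProduct_mulVec_nonneg ar; have hB := hD.dotProduct_mulVec_nonneg ai
    rw [star_trivial] at hA hB; rw [hdr]; linarith
  have hlr0 : 0 ≤ lr := by
    have hA := hL.dotProduct_mulVec_nonneg ar; have hB := hL.dotProduct_mulVec_nonneg ai
    rw [star_trivial] at hA hB; rw [hlr]; linarith
  -- scalar equation
  have heq : lam ^ 2 * (mr : ℂ) + lam * (dr : ℂ) + (lr : ℂ) = 0 := by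
    have h0 := congrArg (fun w => star ν ⬝ᵥ w) hqep
    simp only [Matrix.add_mulVec, Matrix.smul_mulVec, dotProduct_add,
      dotProduct_smul, smul_eq_mul, dotProduct_zero] at h0
    rw [hMq, hDq, hLq] at h0
    exact h0
  set x : ℝ := lam.re with hx
  set y : ℝ := lam.im with hy
  have hre : (x ^ 2 - y ^ 2) * mr + x * dr + lr = 0 := by
    have h := congrArg Complex.re heq
    simp only [pow_two, Complex.add_re, Complex.mul_re, Complex.mul_im, Complex.ofReal_re,
      Complex.ofReal_im, Complex.zero_re, mul_zero, sub_zero, add_zero, zero_mul] at h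
    linear_combination h
  have him : y * (2 * x * mr + dr) = 0 := by
    have h := congrArg Complex.im heq
    simp only [pow_two, Complex.add_im, Complex.mul_re, Complex.mul_im, Complex.ofReal_re,
      Complex.ofReal_im, Complex.zero_im, mul_zero, sub_zero, add_zero, zero_mul] at h
    linear_combination h
  clear_value ar ai mr dr lr x y
  -- trig facts
  have hs : 0 ≤ Real.sin ζ := Real.sin_nonneg_of_nonneg_of_le_pi hζ0 (by linarith [Real.pi_pos])
  have hc : 0 < Real.cos ζ := Real.cos_pos_of_mem_Ioo ⟨by linarith [Real.pi_pos], hζ1⟩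
  have hsc : Real.sin ζ ^ 2 + Real.cos ζ ^ 2 = 1 := Real.sin_sq_add_cos_sq ζ
  rw [hMre, hDre, hLre]
  rcases eq_or_ne y 0 with hy0 | hy0
  · -- real root case: both sides hold
    rw [hy0] at hre
    have hre' : x ^ 2 * mr + x * dr + lr = 0 := by linarith [hre]
    have hxle : x ≤ 0 := by
      by_contra hcon; push_neg at hcon
      nlinarith [mul_pos (mul_pos hcon hcon) hmr0, mul_nonneg hcon.le hdr0]
    constructor
    · intro _
      have hkey : dr ^ 2 - 4 * lr * mr = (2 * mr * x + dr) ^ 2 := by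
        linear_combination (-4 * mr) * hre'
      have hsub : 4 * Real.cos ζ ^ 2 * lr * mr
          = 4 * lr * mr - 4 * lr * mr * Real.sin ζ ^ 2 := by
        linear_combination (4 * lr * mr) * hsc
      have hpos : 0 ≤ 4 * lr * mr * Real.sin ζ ^ 2 :=
        mul_nonneg (mul_nonneg (by linarith) hmr0.le) (sq_nonneg _)
      linarith [sq_nonneg (2 * mr * x + dr)]
    · intro _
      rw [hy0]
      simp only [abs_zero, mul_zero, add_zero]
      exact mul_nonpos_of_nonneg_of_nonpos hs hxle
  · -- complex root case
    have hxd : 2 * x * mr + dr = 0 := by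
      rcases mul_eq_zero.mp him with h | h
      · exact absurd h hy0
      · exact h
    have hxle : x ≤ 0 := by nlinarith
    have hdr_eq : dr = -(2 * x * mr) := by linarith
    have hlr_eq : lr = mr * x ^ 2 + mr * y ^ 2 := by
      linear_combination hre - x * hxd
    have hay : 0 < |y| := abs_pos.mpr hy0
    have hE : (-(2 * x * mr)) ^ 2 - 4 * Real.cos ζ ^ 2 * (mr * x ^ 2 + mr * y ^ 2) * mr
        = 4 * mr ^ 2 * (Real.sin ζ ^ 2 * x ^ 2 - Real.cos ζ ^ 2 * y ^ 2) := by
      linear_combination (-(4 * x ^ 2 * mr ^ 2)) * hsc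
    constructor
    · intro h
      have h1 : Real.cos ζ * |y| ≤ Real.sin ζ * (-x) := by linarith
      have h2 : (Real.cos ζ * |y|) ^ 2 ≤ (Real.sin ζ * (-x)) ^ 2 :=
        pow_le_pow_left₀ (by positivity) h1 2
      rw [mul_pow, mul_pow, _root_.sq_abs, neg_sq] at h2
      have h4 : 0 ≤ Real.sin ζ ^ 2 * x ^ 2 - Real.cos ζ ^ 2 * y ^ 2 := by linarith
      have h5 : 0 ≤ 4 * mr ^ 2 * (Real.sin ζ ^ 2 * x ^ 2 - Real.cos ζ ^ 2 * y ^ 2) :=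
        mul_nonneg (by positivity) h4
      rw [hdr_eq, hlr_eq]
      linarith [hE, h5]
    · intro h
      by_contra hcon; push_neg at hcon
      have h1 : Real.sin ζ * (-x) < Real.cos ζ * |y| := by linarith
      have h2 : (Real.sin ζ * (-x)) ^ 2 < (Real.cos ζ * |y|) ^ 2 := by
        have hb : 0 ≤ Real.sin ζ * (-x) := mul_nonneg hs (neg_nonneg.mpr hxle)
        nlinarith [mul_pos hc hay]
      rw [mul_pow, mul_pow, _root_.sq_abs, neg_sq] at h2
      rw [hdr_eq, hlr_eq] at h
      have h4 : 0 ≤ Real.sin ζ ^ 2 * x ^ 2 - Real.cos ζ ^ 2 * y ^ 2 := by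
        by_contra h4; push_neg at h4
        have : 4 * mr ^ 2 * (Real.sin ζ ^ 2 * x ^ 2 - Real.cos ζ ^ 2 * y ^ 2) < 0 := by
          have : (0:ℝ) < 4 * mr ^ 2 := by positivity
          nlinarith
        linarith [hE, h]
      linarith
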